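/- Let ε and η be scales with ε < η (i.e. lim_ω ε_n/η_n = 0), and let z : ℕ → ℂ be a sequence. If lim_ω |z_n|^{η_n} < ∞, then lim_ω |z_n|^{ε_n} ≤ 1. -/

import Mathlib

open Filter

/-- The ω-limit of a sequence in the compact space `[0,∞]`; for an ultrafilter this
equals the `limsup` along the ultrafilter. -/
noncomputable def limw (ω : Ultrafilter ℕ) (a : ℕ → ENNReal) : ENNReal :=
  Filter.limsup a (ω : Filter ℕ)

/-- `lim_ω |z_n|^{η_n}` viewed in `[0,∞]`. -/
noncomputable def limNorm (ω : Ultrafilter ℕ) (η : ℕ → ℝ) (z : ℕ → ℂ) : ENNReal :=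
  limw ω (fun n => ENNReal.ofReal (‖z n‖ ^ η n))

/-- A scale is a sequence with values in `(0,1]`. -/
def IsScale (η : ℕ → ℝ) : Prop := ∀ n, 0 < η n ∧ η n ≤ 1

/-- `lim_ω η_n / η'_n` in `[0,∞]`. -/
noncomputable def scaleRatio (ω : Ultrafilter ℕ) (η η' : ℕ → ℝ) : ENNReal :=
  limw ω (fun n => ENNReal.ofReal (η n / η' n))

/-- `η ≤ η'` iff `lim_ω η_n/η'_n < ∞`. -/
def ScaleLE (ω : Ultrafilter ℕ) (η η' : ℕ → ℝ) : Prop := scaleRatio ω η η' ≠ ⊤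

/-- `η < η'` iff `lim_ω η_n/η'_n = 0`. -/
def ScaleLT (ω : Ultrafilter ℕ) (η η' : ℕ → ℝ) : Prop := scaleRatio ω η η' = 0

/-- A scale is non-trivial if `lim_ω ε_n = 0`. -/
def NontrivialScale (ω : Ultrafilter ℕ) (ε : ℕ → ℝ) : Prop :=
  limw ω (fun n => ENNReal.ofReal (ε n)) = 0

/-- Two scales are equivalent if `C⁻¹ η_n ≤ η'_n ≤ C η_n` ω-almost surely for some `C > 1`. -/
def ScaleEquiv (ω : Ultrafilter ℕ) (η η' : ℕ → ℝ) : Prop :=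
  ∃ C : ℝ, 1 < C ∧ {n | C⁻¹ * η n ≤ η' n ∧ η' n ≤ C * η n} ∈ ω

/-- STATEMENT 6: if `ε < η` and `lim_ω |z_n|^{η_n} < ∞`, then `lim_ω |z_n|^{ε_n} ≤ 1`. -/
theorem stmt6 (ω : Ultrafilter ℕ) (hω : ∀ s : Set ℕ, sᶜ.Finite → s ∈ ω)
    (ε η : ℕ → ℝ) (hε : IsScale ε) (hη : IsScale η)
    (hlt : ScaleLT ω ε η) (z : ℕ → ℂ) (hz : limNorm ω η z ≠ ⊤) :
    limNorm ω ε z ≤ 1 := by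
  by_contra hcon
  push_neg at hcon
  obtain ⟨t, ht0, ht1, htlt⟩ := ENNReal.lt_iff_exists_real_btwn.mp hcon
  have ht : 1 < t := by
    by_contra h
    exact absurd ht1 (not_lt.mpr (by
      calc ENNReal.ofReal t ≤ ENNReal.ofReal 1 := ENNReal.ofReal_le_ofReal (not_lt.mp h)
        _ = 1 := ENNReal.ofReal_one))
  -- get a uniform bound M ≥ 1 for |z n|^{η n} ω-a.e.
  have hL : limNorm ω η z < ⊤ := hz.lt_top
  set L := limNorm ω η z with hLdef
  have hLadd : L < L + 1 := ENNReal.lt_add_right hz one_ne_zero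
  have hev1 : ∀ᶠ n in (ω : Filter ℕ),
      ENNReal.ofReal (‖z n‖ ^ η n) < L + 1 :=
    Filter.eventually_lt_of_limsup_lt hLadd
  set M : ℝ := max (L + 1).toReal 1 with hMdef
  have hM1 : (1 : ℝ) ≤ M := le_max_right _ _
  have hM0 : (0 : ℝ) < M := lt_of_lt_of_le one_pos hM1
  have hLtop : L + 1 ≠ ⊤ := by
    simp [ENNReal.add_ne_top, hz]
  have hev1' : ∀ᶠ n in (ω : Filter ℕ), ‖z n‖ ^ η n ≤ M := by
    filter_upwards [hev1] with n hn
    have := (ENNReal.ofReal_le_iff_le_toReal hLtop).mp hn.le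
    exact this.trans (le_max_left _ _)
  -- choose δ
  have hlogt : 0 < Real.log t := Real.log_pos ht
  set D : ℝ := max (Real.log M) (Real.log t) with hDdef
  have hD0 : 0 < D := lt_of_lt_of_le hlogt (le_max_right _ _)
  set δ : ℝ := Real.log t / D with hδdef
  have hδ0 : 0 < δ := div_pos hlogt hD0
  have hMδ : M ^ δ ≤ t := by
    have hmle : δ * Real.log M ≤ Real.log t := by
      have h1 : Real.log M / D ≤ 1 := by
        rw [div_le_one hD0]; exact le_max_left _ _
      have : δ * Real.log M = Real.log M / D * Real.log t := by
        rw [hδdef]; ring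
      rw [this]
      calc Real.log M / D * Real.log t ≤ 1 * Real.log t :=
            mul_le_mul_of_nonneg_right h1 hlogt.le
        _ = Real.log t := one_mul _
    calc M ^ δ = Real.exp (δ * Real.log M) := by
          rw [Real.rpow_def_of_pos hM0, mul_comm]
      _ ≤ Real.exp (Real.log t) := Real.exp_le_exp.mpr hmle
      _ = t := Real.exp_log (lt_trans one_pos ht)
  -- ε/η < δ ω-a.e.
  have hev2 : ∀ᶠ n in (ω : Filter ℕ), ε n / η n < δ := by
    have h0 : limsup (fun n => ENNReal.ofReal (ε n / η n)) (ω : Filter ℕ) < ENNReal.ofReal δ := by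
      have := hlt
      unfold ScaleLT scaleRatio limw at this
      rw [this]
      exact ENNReal.ofReal_pos.mpr hδ0
    filter_upwards [Filter.eventually_lt_of_limsup_lt h0] with n hn
    exact ((ENNReal.ofReal_lt_ofReal_iff hδ0).mp hn)
  -- main bound
  have hmain : ∀ᶠ n in (ω : Filter ℕ),
      ENNReal.ofReal (‖z n‖ ^ ε n) ≤ ENNReal.ofReal t := by
    filter_upwards [hev1', hev2] with n h1 h2
    apply ENNReal.ofReal_le_ofReal
    set a : ℝ := ‖z n‖ with hadef
    have ha0 : 0 ≤ a := norm_nonneg _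
    rcases le_or_gt a 1 with hle | hgt
    · calc a ^ ε n ≤ 1 := Real.rpow_le_one ha0 hle (hε n).1.le
        _ ≤ t := ht.le
    · have hηn := (hη n).1
      have : a ^ ε n = (a ^ η n) ^ (ε n / η n) := by
        rw [← Real.rpow_mul ha0]
        congr 1
        field_simp
      rw [this]
      have haη1 : 1 ≤ a ^ η n := Real.one_le_rpow hgt.le hηn.le
      calc (a ^ η n) ^ (ε n / η n) ≤ M ^ (ε n / η n) :=
            Real.rpow_le_rpow (le_trans zero_le_one haη1) h1
              (div_nonneg (hε n).1.le hηn.le)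
        _ ≤ M ^ δ := Real.rpow_le_rpow_of_exponent_le hM1 h2.le
        _ ≤ t := hMδ
  have : limNorm ω ε z ≤ ENNReal.ofReal t :=
    Filter.limsup_le_of_le (by isBoundedDefault) hmain
  exact absurd htlt (not_lt.mpr this)
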